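/- Let v₁, v₂ ∈ ℝⁿ and λ₁, λ₂ ≥ 0. Set X = λ₁ v₁v₁ᵀ + λ₂ v₂v₂ᵀ and Y = v₁v₂ᵀ + v₂v₁ᵀ. Then (X ∘ X) + λ₁λ₂ (Y ∘ Y) = (λ₁(v₁∘v₁) + λ₂(v₂∘v₂))(λ₁(v₁∘v₁) + λ₂(v₂∘v₂))ᵀ + 4λ₁λ₂ (v₁∘v₂)(v₁∘v₂)ᵀ; in particular this matrix is positive semidefinite, entrywise nonnegative, of rank at most 2, and completely positive. -/

import Mathlib

lemma vmv_psd {n : ℕ} (v : Fin n → ℝ) : (Matrix.vecMulVec v v).PosSemidef := by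
  rw [Matrix.posSemidef_iff_dotProduct_mulVec]
  constructor
  · ext i j
    simp [Matrix.vecMulVec_apply, Matrix.conjTranspose_apply, mul_comm]
  · intro x
    have h : dotProduct (star x) ((Matrix.vecMulVec v v).mulVec x)
        = (∑ i, v i * x i) * (∑ i, v i * x i) := by
      simp only [Matrix.mulVec, Matrix.vecMulVec_apply, dotProduct, Pi.star_apply,
        RCLike.star_def, star_trivial, Finset.mul_sum, Finset.sum_mul]
      rw [Finset.sum_comm]
      congr 1; ext i; congr 1; ext j; ring
    rw [h]
    exact mul_self_nonneg _

theorem hadamard_sq_identity {n : ℕ} (v₁ v₂ : Fin n → ℝ) (l₁ l₂ : ℝ)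
    (hl₁ : 0 ≤ l₁) (hl₂ : 0 ≤ l₂) :
    let X := l₁ • Matrix.vecMulVec v₁ v₁ + l₂ • Matrix.vecMulVec v₂ v₂
    let Y := Matrix.vecMulVec v₁ v₂ + Matrix.vecMulVec v₂ v₁
    let M := Matrix.hadamard X X + (l₁ * l₂) • Matrix.hadamard Y Y
    let u := l₁ • (v₁ * v₁) + l₂ • (v₂ * v₂)
    M = Matrix.vecMulVec u u
          + (4 * (l₁ * l₂)) • Matrix.vecMulVec (v₁ * v₂) (v₁ * v₂) ∧
    M.PosSemidef ∧ (∀ i j, 0 ≤ M i j) ∧ M.rank ≤ 2 ∧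
    (∃ (k : ℕ) (x : Fin k → (Fin n → ℝ)),
      (∀ i j, 0 ≤ x i j) ∧ M = ∑ i, Matrix.vecMulVec (x i) (x i)) := by
  intro X Y M u
  obtain ⟨c', hc'0, hc'sq⟩ : ∃ c' : ℝ, 0 ≤ c' ∧ c' * c' = 4 * (l₁ * l₂) :=
    ⟨Real.sqrt (4 * (l₁ * l₂)), Real.sqrt_nonneg _,
      Real.mul_self_sqrt (by positivity)⟩
  obtain ⟨s, hs0, hs⟩ : ∃ s : ℝ, 0 ≤ s ∧ s * s = 1/2 :=
    ⟨Real.sqrt (1/2), Real.sqrt_nonneg _, Real.mul_self_sqrt (by norm_num)⟩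
  -- the main identity
  have hM : M = Matrix.vecMulVec u u
      + (4 * (l₁ * l₂)) • Matrix.vecMulVec (v₁ * v₂) (v₁ * v₂) := by
    ext i j
    simp only [M, X, Y, u, Matrix.add_apply, Matrix.smul_apply, Matrix.hadamard_apply,
      Matrix.vecMulVec_apply, Pi.add_apply, Pi.smul_apply, Pi.mul_apply, smul_eq_mul]
    ring
  have huv : ∀ i, u i = l₁ * (v₁ i * v₁ i) + l₂ * (v₂ i * v₂ i) := by
    intro i; simp [u]
  have hu0 : ∀ i, 0 ≤ u i := fun i => by
    rw [huv i]
    exact add_nonneg (mul_nonneg hl₁ (mul_self_nonneg _)) (mul_nonneg hl₂ (mul_self_nonneg _))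
  have hdom : ∀ i, |c' * (v₁ i * v₂ i)| ≤ u i := by
    intro i
    have hsq : (c' * (v₁ i * v₂ i)) ^ 2 ≤ (u i) ^ 2 := by
      rw [huv i]
      have h1 : (c' * (v₁ i * v₂ i)) ^ 2 = 4 * (l₁ * l₂) * (v₁ i * v₂ i) ^ 2 := by
        rw [mul_pow, sq c', hc'sq]
      rw [h1]
      nlinarith [sq_nonneg (l₁ * (v₁ i * v₁ i) - l₂ * (v₂ i * v₂ i))]
    calc |c' * (v₁ i * v₂ i)| = Real.sqrt ((c' * (v₁ i * v₂ i)) ^ 2) :=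
          (Real.sqrt_sq_eq_abs _).symm
      _ ≤ Real.sqrt ((u i) ^ 2) := Real.sqrt_le_sqrt hsq
      _ = u i := Real.sqrt_sq (hu0 i)
  -- the completely positive decomposition
  set x : Fin 2 → (Fin n → ℝ) :=
    ![fun j => s * (u j + c' * (v₁ j * v₂ j)), fun j => s * (u j - c' * (v₁ j * v₂ j))]
    with hx'
  have hx0 : ∀ i j, 0 ≤ x i j := by
    intro i j
    have h2 := abs_le.mp (hdom j)
    fin_cases i <;>
      simp only [x, Matrix.cons_val_zero, Matrix.cons_val_one, Matrix.head_cons] <;>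
    · apply mul_nonneg hs0
      linarith [h2.1, h2.2]
  have hsum : M = ∑ i, Matrix.vecMulVec (x i) (x i) := by
    rw [hM]
    ext i j
    simp only [Matrix.add_apply, Matrix.smul_apply, Matrix.vecMulVec_apply,
      Fin.sum_univ_two, Matrix.sum_apply, x, Matrix.cons_val_zero, Matrix.cons_val_one,
      Matrix.head_cons, Pi.mul_apply, smul_eq_mul]
    linear_combination (-(2 * u i * u j) - 2 * (c' * c') * (v₁ i * v₂ i) * (v₁ j * v₂ j)) * hs
      - ((v₁ i * v₂ i) * (v₁ j * v₂ j)) * hc'sq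
  refine ⟨hM, ?_, ?_, ?_, 2, x, hx0, hsum⟩
  · -- PSD
    have h : M = Matrix.vecMulVec u u
        + Matrix.vecMulVec (c' • (v₁ * v₂)) (c' • (v₁ * v₂)) := by
      rw [hM]
      congr 1
      ext i j
      simp only [Matrix.smul_apply, Matrix.vecMulVec_apply, Pi.smul_apply, Pi.mul_apply,
        smul_eq_mul]
      linear_combination ((v₁ i * v₂ i) * (v₁ j * v₂ j)) * hc'sq.symm
    rw [h]
    exact (vmv_psd u).add (vmv_psd _)
  · -- entrywise nonneg
    intro i j
    rw [hsum]
    simp only [Fin.sum_univ_two, Matrix.add_apply, Matrix.vecMulVec_apply]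
    exact add_nonneg (mul_nonneg (hx0 0 i) (hx0 0 j)) (mul_nonneg (hx0 1 i) (hx0 1 j))
  · -- rank ≤ 2
    have hfac : M = (Matrix.of fun i (k : Fin 2) => ![u i, 4 * (l₁ * l₂) * (v₁ i * v₂ i)] k) *
        (Matrix.of fun (k : Fin 2) j => ![u, v₁ * v₂] k j) := by
      rw [hM]
      ext i j
      simp [Matrix.mul_apply, Fin.sum_univ_two, Matrix.vecMulVec_apply, mul_assoc]
    calc M.rank ≤ (Matrix.of fun i (k : Fin 2) => ![u i, 4 * (l₁ * l₂) * (v₁ i * v₂ i)] k).rank :=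
          by rw [hfac]; exact Matrix.rank_mul_le_left _ _
      _ ≤ Fintype.card (Fin 2) := Matrix.rank_le_card_width _
      _ = 2 := by simp
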